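/- Let X be a topological space and P a ring of open subsets of X such that P ⊆ P_seq and P is closed under a winning strategy for Player I in the open-open game on X. Then X/P with the Q_P-topology is a completely regular space and the Q_P-map q : X → X/P is skeletal. -/

import Mathlib

open Set Topology

/-- The equivalence relation identifying points lying in exactly the same members of `P`. -/
def pSetoid {X : Type*} (P : Set (Set X)) : Setoid X where
  r x y := ∀ V ∈ P, x ∈ V ↔ y ∈ V
  iseqv := ⟨fun _ _ _ => Iff.rfl, fun h V hV => (h V hV).symm,
    fun h1 h2 V hV => (h1 V hV).trans (h2 V hV)⟩

/-- The quotient `X/P`. -/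
def pQuot {X : Type*} (P : Set (Set X)) : Type _ := Quotient (pSetoid P)

/-- The `Q_P`-map `q : X → X/P`. -/
def pMap {X : Type*} (P : Set (Set X)) : X → pQuot P := Quotient.mk (pSetoid P)

/-- The `Q_P`-topology on `X/P`, generated by the images `q[V]`, `V ∈ P`. -/
def pTop {X : Type*} (P : Set (Set X)) : TopologicalSpace (pQuot P) :=
  TopologicalSpace.generateFrom {S | ∃ V ∈ P, S = pMap P '' V}

/-- `R_seq`: sets `W` that are unions `⋃ₙ Uₙ` with `Uₖ ⊆ X \ Vₖ ⊆ Uₖ₊₁`, `Uₙ, Vₙ ∈ R`. -/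
def seqFam {X : Type*} (R : Set (Set X)) : Set (Set X) :=
  {W | ∃ U V : ℕ → Set X, (∀ n, U n ∈ R) ∧ (∀ n, V n ∈ R) ∧
    (∀ k, U k ⊆ (V k)ᶜ ∧ (V k)ᶜ ⊆ U (k + 1)) ∧ (⋃ n, U n) = W}

/-- The family of cozero sets of `X`. -/
def cozeroFam (X : Type*) [TopologicalSpace X] : Set (Set X) :=
  {W | ∃ f : X → ℝ, Continuous f ∧ (∀ x, f x ∈ Set.Icc (0 : ℝ) 1) ∧ W = f ⁻¹' Set.Ioc 0 1}

/-- A skeletal map: a continuous surjection such that the closure of the image of every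
nonempty open set has nonempty interior. -/
def IsSkeletal {X Y : Type*} [TopologicalSpace X] [TopologicalSpace Y] (f : X → Y) : Prop :=
  Continuous f ∧ Function.Surjective f ∧
    ∀ U : Set X, IsOpen U → U.Nonempty → (interior (closure (f '' U))).Nonempty

/-- A skeletal family of open subsets of `X`. -/
def SkeletalFamily {X : Type*} [TopologicalSpace X] (P : Set (Set X)) : Prop :=
  ∀ V : Set X, IsOpen V → V.Nonempty →
    ∃ W ∈ P, ∀ U ∈ P, U ⊆ W → U.Nonempty → (U ∩ V).Nonempty

/-- A π-base: a family of nonempty open sets such that every nonempty open set contains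
a member of the family. -/
def IsPiBase {Y : Type*} [TopologicalSpace Y] (B : Set (Set Y)) : Prop :=
  (∀ b ∈ B, IsOpen b ∧ b.Nonempty) ∧ ∀ U : Set Y, IsOpen U → U.Nonempty → ∃ b ∈ B, b ⊆ U

/-- A strategy for Player I in the open-open game produces nonempty open sets. -/
def ValidStrategy {X : Type*} [TopologicalSpace X] (σ : List (Set X) → Set X) : Prop :=
  ∀ l : List (Set X), IsOpen (σ l) ∧ (σ l).Nonempty

/-- `B` is a play of Player II against the strategy `σ` of Player I: each `B n` is a
nonempty open subset of the set produced by `σ` from the previous moves of Player II. -/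
def IsPlayAgainst {X : Type*} [TopologicalSpace X] (σ : List (Set X) → Set X)
    (B : ℕ → Set X) : Prop :=
  ∀ n, IsOpen (B n) ∧ (B n).Nonempty ∧ B n ⊆ σ (List.ofFn (fun i : Fin n => B i))

/-- A winning strategy for Player I in the open-open game: every play of Player II against
it has dense union. -/
def WinningStrategy {X : Type*} [TopologicalSpace X] (σ : List (Set X) → Set X) : Prop :=
  ValidStrategy σ ∧ ∀ B : ℕ → Set X, IsPlayAgainst σ B → Dense (⋃ n, B n)

/-- A space is I-favorable if Player I has a winning strategy in the open-open game. -/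
def IFavorable (X : Type*) [TopologicalSpace X] : Prop :=
  ∃ σ : List (Set X) → Set X, WinningStrategy σ

/-- `P` is closed under the strategy `σ`. -/
def ClosedUnderStrategy {X : Type*} [TopologicalSpace X] (P : Set (Set X))
    (σ : List (Set X) → Set X) : Prop :=
  σ [] ∈ P ∧ ∀ l : List (Set X), (∀ b ∈ l, b ∈ P) → σ l ∈ P

/-- The limit of an inverse system, as the subspace of threads in the product. -/
abbrev invLimit {ι : Type*} [Preorder ι] (Y : ι → Type*)
    (bond : ∀ i j : ι, i ≤ j → Y j → Y i) : Type _ :=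
  {u : ∀ i, Y i // ∀ (i j : ι) (h : i ≤ j), bond i j h (u j) = u i}

/-- The topology of the inverse limit, with explicitly given topologies on factors. -/
def invLimitTop {ι : Type*} [Preorder ι] (Y : ι → Type*) (t : ∀ i, TopologicalSpace (Y i))
    (bond : ∀ i j : ι, i ≤ j → Y j → Y i) : TopologicalSpace (invLimit Y bond) :=
  @instTopologicalSpaceSubtype _ _ (@Pi.topologicalSpace ι Y t)

/-- σ-completeness of an inverse system: each countable chain of indices has a least upper
bound `l`, and the canonical map from `Y l` to the limit of the countable subsystem is a
homeomorphism (an embedding whose range is the set of threads). -/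
def SigmaComplete {ι : Type*} [Preorder ι] (Y : ι → Type*) (t : ∀ i, TopologicalSpace (Y i))
    (bond : ∀ i j : ι, i ≤ j → Y j → Y i) : Prop :=
  (∀ s : ℕ → ι, Monotone s → ∃ l, IsLUB (Set.range s) l) ∧
  ∀ (s : ℕ → ι) (hs : Monotone s) (l : ι) (hl : IsLUB (Set.range s) l),
    @IsEmbedding (Y l) (∀ n, Y (s n)) (t l) (@Pi.topologicalSpace ℕ _ (fun n => t (s n)))
      (fun x n => bond (s n) l (hl.1 (Set.mem_range_self n)) x) ∧
    Set.range (fun (x : Y l) (n : ℕ) => bond (s n) l (hl.1 (Set.mem_range_self n)) x) =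
      {u : ∀ n, Y (s n) | ∀ (n m : ℕ) (h : n ≤ m), bond (s n) (s m) (hs h) (u m) = u n}

/-- A σ-complete inverse system of topological spaces over a directed partial order,
with continuous surjective bonding maps. -/
structure TopInvSystem : Type 1 where
  ι : Type
  [ord : PartialOrder ι]
  directed : IsDirected ι (· ≤ ·)
  Y : ι → Type
  [t : ∀ i, TopologicalSpace (Y i)]
  bond : ∀ i j : ι, i ≤ j → Y j → Y i
  bond_refl : ∀ i (x : Y i), bond i i le_rfl x = x
  bond_comp : ∀ (i j k : ι) (hij : i ≤ j) (hjk : j ≤ k) (x : Y k),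
    bond i j hij (bond j k hjk x) = bond i k (hij.trans hjk) x
  bond_cont : ∀ (i j : ι) (h : i ≤ j), Continuous (bond i j h)
  bond_surj : ∀ (i j : ι) (h : i ≤ j), Function.Surjective (bond i j h)
  sigmaComplete : SigmaComplete Y t bond

instance (S : TopInvSystem) : PartialOrder S.ι := S.ord
instance (S : TopInvSystem) (i : S.ι) : TopologicalSpace (S.Y i) := S.t i

/-- The limit of a `TopInvSystem`. -/
def TopInvSystem.Limit (S : TopInvSystem) : Type := invLimit S.Y S.bond

instance (S : TopInvSystem) : TopologicalSpace S.Limit :=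
  inferInstanceAs (TopologicalSpace (invLimit S.Y S.bond))

/-- The bonding map `X/R → X/P` for `P ⊆ R`, sending `[x]_R` to `[x]_P`. -/
def pBond {X : Type*} (P R : Set (Set X)) (h : P ⊆ R) : pQuot R → pQuot P :=
  Quotient.lift (pMap P) (fun _ _ hab => Quotient.sound (fun V hV => hab V (h hV)))

/-- A `T`-club on a space `X` (with `T` the cozero sets): a collection of countable
subfamilies of `T`, each closed under a fixed winning strategy for Player I, closed under
finite unions and intersections, contained in its `seq`-family, which is cofinal among
countable subfamilies of `T` and closed under countable chains. -/
def TClub {X : Type*} [TopologicalSpace X] (C : Set (Set (Set X))) : Prop :=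
  ∃ σ : List (Set X) → Set X, WinningStrategy σ ∧
    (∀ P ∈ C, P.Countable ∧ P ⊆ cozeroFam X ∧ ClosedUnderStrategy P σ ∧
      (∀ A ∈ P, ∀ B ∈ P, A ∪ B ∈ P ∧ A ∩ B ∈ P) ∧ P ⊆ seqFam P) ∧
    (∀ Q : Set (Set X), Q.Countable → Q ⊆ cozeroFam X → ∃ P ∈ C, Q ⊆ P) ∧
    (∀ f : ℕ → Set (Set X), (∀ n, f n ∈ C) → Monotone f → (⋃ n, f n) ∈ C)

section Aux

variable {X : Type*} (P : Set (Set X))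

lemma pMap_surjective : Function.Surjective (pMap P) := fun z => Quotient.exists_rep z

lemma pMap_mem_image {V : Set X} (hV : V ∈ P) {x : X} :
    pMap P x ∈ pMap P '' V ↔ x ∈ V := by
  constructor
  · rintro ⟨y, hy, he⟩
    exact (Quotient.exact he V hV).mp hy
  · exact fun h => ⟨x, h, rfl⟩

lemma pMap_image_inter {A B : Set X} (hA : A ∈ P) (hB : B ∈ P) :
    pMap P '' (A ∩ B) = pMap P '' A ∩ pMap P '' B := by
  ext z
  constructor
  · rintro ⟨y, ⟨h1, h2⟩, rfl⟩
    exact ⟨⟨y, h1, rfl⟩, ⟨y, h2, rfl⟩⟩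
  · rintro ⟨⟨y, hy, rfl⟩, hz2⟩
    exact ⟨y, ⟨hy, (pMap_mem_image P hB).mp hz2⟩, rfl⟩

lemma pMap_image_compl {V : Set X} (hV : V ∈ P) :
    (pMap P '' V)ᶜ = pMap P '' Vᶜ := by
  ext z
  obtain ⟨a, rfl⟩ := pMap_surjective P z
  constructor
  · intro hz
    exact ⟨a, fun haV => hz ⟨a, haV, rfl⟩, rfl⟩
  · rintro ⟨y, hy, he⟩ hz
    exact hy ((Quotient.exact he V hV).mpr ((pMap_mem_image P hV).mp hz))

lemma pMap_image_isOpen {V : Set X} (hV : V ∈ P) :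
    @IsOpen _ (pTop P) (pMap P '' V) :=
  TopologicalSpace.isOpen_generateFrom_of_mem ⟨V, hV, rfl⟩

lemma pTop_basis (hring : ∀ A ∈ P, ∀ B ∈ P, A ∪ B ∈ P ∧ A ∩ B ∈ P)
    {S : Set (pQuot P)} (hS : @IsOpen _ (pTop P) S) :
    ∀ z ∈ S, (∃ V ∈ P, z ∈ pMap P '' V ∧ pMap P '' V ⊆ S) ∨ S = univ := by
  have hS' : TopologicalSpace.GenerateOpen {S | ∃ V ∈ P, S = pMap P '' V} S := hS
  clear hS
  induction hS' with
  | basic S hSb =>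
    obtain ⟨V, hV, rfl⟩ := hSb
    exact fun z hz => Or.inl ⟨V, hV, hz, subset_rfl⟩
  | univ => exact fun z _ => Or.inr rfl
  | inter A B hA hB ihA ihB =>
    intro z hz
    rcases ihA z hz.1 with ⟨VA, hVA, hzA, hsubA⟩ | rfl
    · rcases ihB z hz.2 with ⟨VB, hVB, hzB, hsubB⟩ | rfl
      · refine Or.inl ⟨VA ∩ VB, (hring _ hVA _ hVB).2, ?_, ?_⟩
        · rw [pMap_image_inter P hVA hVB]; exact ⟨hzA, hzB⟩
        · rw [pMap_image_inter P hVA hVB]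
          exact fun w hw => ⟨hsubA hw.1, hsubB hw.2⟩
      · exact Or.inl ⟨VA, hVA, hzA, fun w hw => ⟨hsubA hw, mem_univ w⟩⟩
    · rcases ihB z hz.2 with ⟨VB, hVB, hzB, hsubB⟩ | rfl
      · exact Or.inl ⟨VB, hVB, hzB, fun w hw => ⟨mem_univ w, hsubB hw⟩⟩
      · exact Or.inr (by simp)
  | sUnion S hSm ih =>
    intro z hz
    obtain ⟨s, hsS, hzs⟩ := hz
    rcases ih s hsS z hzs with ⟨V, hV, hzV, hsub⟩ | rfl
    · exact Or.inl ⟨V, hV, hzV, hsub.trans (subset_sUnion_of_mem hsS)⟩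
    · exact Or.inr (eq_univ_of_univ_subset (subset_sUnion_of_mem hsS))

lemma pMap_continuous [TopologicalSpace X] (hopen : ∀ V ∈ P, IsOpen V) :
    @Continuous X (pQuot P) _ (pTop P) (pMap P) := by
  refine continuous_generateFrom_iff.mpr ?_
  rintro s ⟨V, hV, rfl⟩
  have h : pMap P ⁻¹' (pMap P '' V) = V := Set.ext fun x => pMap_mem_image P hV
  rw [h]
  exact hopen V hV

variable {R : Set (Set X)}

lemma pBond_mk (h : R ⊆ P) (x : X) : pBond R P h (pMap P x) = pMap R x := rfl

lemma pBond_preimage (h : R ⊆ P) {V : Set X} (hVR : V ∈ R) :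
    pBond R P h ⁻¹' (pMap R '' V) = pMap P '' V := by
  ext z
  obtain ⟨a, rfl⟩ := pMap_surjective P z
  rw [mem_preimage, pBond_mk P h, pMap_mem_image R hVR, pMap_mem_image P (h hVR)]

lemma pBond_continuous (h : R ⊆ P) :
    @Continuous (pQuot P) (pQuot R) (pTop P) (pTop R) (pBond R P h) := by
  letI := pTop P
  refine continuous_generateFrom_iff.mpr ?_
  rintro s ⟨V, hV, rfl⟩
  rw [pBond_preimage P h hV]
  exact pMap_image_isOpen P (h hV)

end Aux

lemma exists_countable_subring {X : Type*} (P : Set (Set X))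
    (hring : ∀ A ∈ P, ∀ B ∈ P, A ∪ B ∈ P ∧ A ∩ B ∈ P)
    (hseq : P ⊆ seqFam P) {W : Set X} (hW : W ∈ P) :
    ∃ R : Set (Set X), R ⊆ P ∧ R.Countable ∧ W ∈ R ∧
      (∀ A ∈ R, ∀ B ∈ R, A ∪ B ∈ R ∧ A ∩ B ∈ R) ∧ R ⊆ seqFam R := by
  classical
  have hw : ∀ A : Set X, ∃ UV : (ℕ → Set X) × (ℕ → Set X),
      A ∈ P → (∀ n, UV.1 n ∈ P) ∧ (∀ n, UV.2 n ∈ P) ∧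
        (∀ k, UV.1 k ⊆ (UV.2 k)ᶜ ∧ (UV.2 k)ᶜ ⊆ UV.1 (k + 1)) ∧ (⋃ n, UV.1 n) = A := by
    intro A
    by_cases hA : A ∈ P
    · obtain ⟨U, V, h1, h2, h3, h4⟩ := hseq hA
      exact ⟨(U, V), fun _ => ⟨h1, h2, h3, h4⟩⟩
    · exact ⟨(fun _ => ∅, fun _ => ∅), fun h => absurd h hA⟩
  choose F hF using hw
  set step : Set (Set X) → Set (Set X) := fun Q =>
    Q ∪ Set.image2 (· ∪ ·) Q Q ∪ Set.image2 (· ∩ ·) Q Q ∪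
      ⋃ A ∈ Q, (Set.range (F A).1 ∪ Set.range (F A).2) with hstep
  have hsub : ∀ Q : Set (Set X), Q ⊆ step Q := fun Q x hx =>
    Or.inl (Or.inl (Or.inl hx))
  have hstepP : ∀ Q : Set (Set X), Q ⊆ P → step Q ⊆ P := by
    intro Q hQ x hx
    rcases hx with ((hx | hx) | hx) | hx
    · exact hQ hx
    · obtain ⟨a, ha, b, hb, rfl⟩ := hx
      exact (hring a (hQ ha) b (hQ hb)).1
    · obtain ⟨a, ha, b, hb, rfl⟩ := hx
      exact (hring a (hQ ha) b (hQ hb)).2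
    · simp only [mem_iUnion, mem_union, mem_range] at hx
      obtain ⟨A, hAQ, hx⟩ := hx
      rcases hx with ⟨n, rfl⟩ | ⟨n, rfl⟩
      · exact ((hF A (hQ hAQ)).1 n)
      · exact ((hF A (hQ hAQ)).2.1 n)
  have hstepC : ∀ Q : Set (Set X), Q.Countable → (step Q).Countable := by
    intro Q hQ
    refine (((hQ.union (hQ.image2 hQ _)).union (hQ.image2 hQ _)).union ?_)
    exact hQ.biUnion fun A _ => (countable_range _).union (countable_range _)
  set Qn : ℕ → Set (Set X) := fun n => step^[n] {W} with hQn
  have hQsucc : ∀ n, Qn (n + 1) = step (Qn n) := fun n =>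
    Function.iterate_succ_apply' step n {W}
  have hQmono : Monotone Qn := monotone_nat_of_le_succ fun n => by
    rw [hQsucc]; exact hsub _
  have hQP : ∀ n, Qn n ⊆ P := by
    intro n
    induction n with
    | zero => exact fun x hx => (show x = W from hx) ▸ hW
    | succ n ih => rw [hQsucc]; exact hstepP _ ih
  have hQC : ∀ n, (Qn n).Countable := by
    intro n
    induction n with
    | zero => exact countable_singleton W
    | succ n ih => rw [hQsucc]; exact hstepC _ ih
  refine ⟨⋃ n, Qn n, ?_, ?_, ?_, ?_, ?_⟩
  · exact iUnion_subset hQP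
  · exact countable_iUnion hQC
  · exact mem_iUnion.mpr ⟨0, rfl⟩
  · intro A hA B hB
    obtain ⟨m, hm⟩ := mem_iUnion.mp hA
    obtain ⟨n, hn⟩ := mem_iUnion.mp hB
    have hmA : A ∈ Qn (max m n) := hQmono (le_max_left m n) hm
    have hnB : B ∈ Qn (max m n) := hQmono (le_max_right m n) hn
    constructor
    · exact mem_iUnion.mpr ⟨max m n + 1, by
        rw [hQsucc]
        exact Or.inl (Or.inl (Or.inr ⟨A, hmA, B, hnB, rfl⟩))⟩
    · exact mem_iUnion.mpr ⟨max m n + 1, by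
        rw [hQsucc]
        exact Or.inl (Or.inr ⟨A, hmA, B, hnB, rfl⟩)⟩
  · intro A hA
    obtain ⟨n, hn⟩ := mem_iUnion.mp hA
    obtain ⟨h1, h2, h3, h4⟩ := hF A (hQP n hn)
    refine ⟨(F A).1, (F A).2, ?_, ?_, h3, h4⟩
    · intro k
      refine mem_iUnion.mpr ⟨n + 1, ?_⟩
      rw [hQsucc]
      exact Or.inr (mem_iUnion₂.mpr ⟨A, hn, Or.inl ⟨k, rfl⟩⟩)
    · intro k
      refine mem_iUnion.mpr ⟨n + 1, ?_⟩
      rw [hQsucc]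
      exact Or.inr (mem_iUnion₂.mpr ⟨A, hn, Or.inr ⟨k, rfl⟩⟩)

lemma countable_complReg {X : Type*} (R : Set (Set X))
    (hring : ∀ A ∈ R, ∀ B ∈ R, A ∪ B ∈ R ∧ A ∩ B ∈ R)
    (hseq : R ⊆ seqFam R) (hcount : R.Countable) :
    @CompletelyRegularSpace (pQuot R) (pTop R) := by
  letI := pTop R
  haveI : T0Space (pQuot R) := by
    rw [t0Space_iff_inseparable]
    intro x y hxy
    obtain ⟨a, rfl⟩ := pMap_surjective R x
    obtain ⟨b, rfl⟩ := pMap_surjective R y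
    refine Quotient.sound fun V hV => ?_
    rw [← pMap_mem_image R hV, ← pMap_mem_image R hV]
    exact hxy.mem_open_iff (pMap_image_isOpen R hV)
  haveI : RegularSpace (pQuot R) := by
    refine RegularSpace.of_exists_mem_nhds_isClosed_subset ?_
    intro z s hs
    obtain ⟨O, hOs, hO, hzO⟩ := mem_nhds_iff.mp hs
    rcases pTop_basis R hring hO z hzO with ⟨V, hV, hzV, hVO⟩ | rfl
    · obtain ⟨a, haV, rfl⟩ := hzV
      obtain ⟨u, v, hu, hv, hch, huU⟩ := hseq hV
      rw [← huU] at haV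
      obtain ⟨m, ham⟩ := mem_iUnion.mp haV
      refine ⟨(pMap R '' v m)ᶜ, ?_, (pMap_image_isOpen R (hv m)).isClosed_compl, ?_⟩
      · refine mem_nhds_iff.mpr ⟨pMap R '' u m, ?_, pMap_image_isOpen R (hu m), (pMap_mem_image R (hu m)).mpr ham⟩
        rintro w ⟨c, hc, rfl⟩ hwv
        exact (hch m).1 hc ((pMap_mem_image R (hv m)).mp hwv)
      · rw [pMap_image_compl R (hv m)]
        rintro w ⟨c, hc, rfl⟩
        refine hOs (hVO ⟨c, ?_, rfl⟩)
        rw [← huU]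
        exact mem_iUnion.mpr ⟨m + 1, (hch m).2 hc⟩
    · exact ⟨univ, Filter.univ_mem, isClosed_univ, hOs⟩
  haveI : SecondCountableTopology (pQuot R) := by
    have hbasis : TopologicalSpace.IsTopologicalBasis
        (insert univ {S | ∃ V ∈ R, S = pMap R '' V}) := by
      refine TopologicalSpace.isTopologicalBasis_of_isOpen_of_nhds ?_ ?_
      · rintro u (rfl | ⟨V, hV, rfl⟩)
        · exact isOpen_univ
        · exact pMap_image_isOpen R hV
      · intro a u hau hu
        rcases pTop_basis R hring hu a hau with ⟨V, hV, haV, hVu⟩ | rfl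
        · exact ⟨pMap R '' V, Or.inr ⟨V, hV, rfl⟩, haV, hVu⟩
        · exact ⟨univ, Or.inl rfl, mem_univ a, subset_rfl⟩
    refine hbasis.secondCountableTopology ?_
    refine (Countable.insert _ ?_)
    have : {S | ∃ V ∈ R, S = pMap R '' V} = (fun V => pMap R '' V) '' R := by
      ext S; simp [eq_comm]
    rw [this]
    exact hcount.image _
  haveI : T3Space (pQuot R) := {}
  haveI : TopologicalSpace.MetrizableSpace (pQuot R) := inferInstance
  letI : MetricSpace (pQuot R) := TopologicalSpace.metrizableSpaceMetric _
  infer_instance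





lemma skeletal_of_strategy {X : Type*} [TopologicalSpace X] (P : Set (Set X))
    (hopen : ∀ V ∈ P, IsOpen V)
    (σ : List (Set X) → Set X) (hwin : WinningStrategy σ)
    (hclosed : ClosedUnderStrategy P σ) :
    ∀ U : Set X, IsOpen U → U.Nonempty →
      ∃ W, W ∈ P ∧ W.Nonempty ∧ ∀ V ∈ P, V ⊆ W → V.Nonempty → (V ∩ U).Nonempty := by
  classical
  intro U hU hUne
  by_contra hcon
  have h : ∀ W, W ∈ P → W.Nonempty → ∃ V, V ∈ P ∧ V ⊆ W ∧ V.Nonempty ∧ V ∩ U = ∅ := by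
    intro W hW hWne
    rcases Classical.em (∃ V, V ∈ P ∧ V ⊆ W ∧ V.Nonempty ∧ V ∩ U = ∅) with hyes | hno
    · exact hyes
    · exfalso
      apply hcon
      refine ⟨W, hW, hWne, ?_⟩
      intro V hV hVW hVne
      rcases Classical.em ((V ∩ U).Nonempty) with hy | hn
      · exact hy
      · exact absurd ⟨V, hV, hVW, hVne, not_nonempty_iff_eq_empty.mp hn⟩ hno
  have hch : ∀ l : List (Set X), ∃ V : Set X, (∀ b ∈ l, b ∈ P) →
      V ∈ P ∧ V ⊆ σ l ∧ V.Nonempty ∧ V ∩ U = ∅ := by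
    intro l
    by_cases hl : ∀ b ∈ l, b ∈ P
    · obtain ⟨V, h1, h2, h3, h4⟩ := h (σ l) (hclosed.2 l hl) (hwin.1 l).2
      exact ⟨V, fun _ => ⟨h1, h2, h3, h4⟩⟩
    · exact ⟨∅, fun hh => absurd hh hl⟩
  choose r hr using hch
  let L : ℕ → List (Set X) := fun n => Nat.rec [] (fun _ l => l ++ [r l]) n
  have hLsucc : ∀ n, L (n + 1) = L n ++ [r (L n)] := fun n => rfl
  have hLP : ∀ n, ∀ b ∈ L n, b ∈ P := by
    intro n
    induction n with
    | zero => intro b hb; exact absurd hb List.not_mem_nil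
    | succ n ih =>
      intro b hb
      rw [hLsucc, List.mem_append] at hb
      rcases hb with hb | hb
      · exact ih b hb
      · rw [List.mem_singleton] at hb
        exact hb ▸ (hr (L n) ih).1
  set B : ℕ → Set X := fun n => r (L n) with hB
  have hofFn : ∀ n, List.ofFn (fun i : Fin n => B i) = L n := by
    intro n
    induction n with
    | zero => rfl
    | succ n ih =>
      rw [List.ofFn_succ', hLsucc, List.concat_eq_append]
      congr 1
  have hplay : IsPlayAgainst σ B := by
    intro n
    obtain ⟨h1, h2, h3, _⟩ := hr (L n) (hLP n)
    exact ⟨hopen _ h1, h3, by rw [hofFn n]; exact h2⟩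
  have hdense := hwin.2 B hplay
  obtain ⟨y, hyU, hyB⟩ := hdense.inter_open_nonempty U hU hUne
  obtain ⟨n, hyn⟩ := mem_iUnion.mp hyB
  have := (hr (L n) (hLP n)).2.2.2
  exact absurd this (by rw [← Set.not_nonempty_iff_eq_empty]; push_neg; exact ⟨y, hyn, hyU⟩)


theorem stmt15 {X : Type*} [TopologicalSpace X] (P : Set (Set X))
    (hopen : ∀ V ∈ P, IsOpen V)
    (hring : ∀ A ∈ P, ∀ B ∈ P, A ∪ B ∈ P ∧ A ∩ B ∈ P)
    (hseq : P ⊆ seqFam P)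
    (σ : List (Set X) → Set X) (hwin : WinningStrategy σ)
    (hclosed : ClosedUnderStrategy P σ) :
    @CompletelyRegularSpace (pQuot P) (pTop P) ∧
      @IsSkeletal X (pQuot P) _ (pTop P) (pMap P) := by
  classical
  letI := pTop P
  have hcont : Continuous (pMap P) := pMap_continuous P hopen
  have hsurj := pMap_surjective P
  constructor
  · constructor
    intro x K hK hx
    rcases pTop_basis P hring hK.isOpen_compl x hx with ⟨V, hV, hxV, hVK⟩ | huniv
    · obtain ⟨R, hRP, hRc, hVR, hringR, hseqR⟩ := exists_countable_subring P hring hseq hV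
      letI := pTop R
      haveI hCR := countable_complReg R hringR hseqR hRc
      have hbc : Continuous (pBond R P hRP) := pBond_continuous P hRP
      have hclosed' : IsClosed ((pMap R '' V)ᶜ) := (pMap_image_isOpen R hVR).isClosed_compl
      obtain ⟨a, rfl⟩ := hsurj x
      have hbx : pBond R P hRP (pMap P a) ∉ (pMap R '' V)ᶜ := by
        rw [pBond_mk P hRP]
        simp only [mem_compl_iff, not_not]
        exact (pMap_mem_image R hVR).mpr ((pMap_mem_image P hV).mp hxV)
      obtain ⟨f, hf, hf0, hf1⟩ := hCR.completely_regular _ _ hclosed' hbx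
      refine ⟨f ∘ pBond R P hRP, hf.comp hbc, hf0, ?_⟩
      intro k hk
      refine hf1 ?_
      obtain ⟨b, rfl⟩ := hsurj k
      intro hmem
      rw [pBond_mk P hRP] at hmem
      exact hVK ((pMap_mem_image P hV).mpr ((pMap_mem_image R hVR).mp hmem)) hk
    · have hKe : K = ∅ := by rw [← compl_compl K, huniv, compl_univ]
      refine ⟨fun _ => 0, continuous_const, rfl, ?_⟩
      rw [hKe]
      exact fun k hk => absurd hk (notMem_empty k)
  · refine ⟨hcont, hsurj, ?_⟩
    intro U hU hUne
    obtain ⟨W, hW, hWne, hWskel⟩ := skeletal_of_strategy P hopen σ hwin hclosed U hU hUne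
    have hWsub : pMap P '' W ⊆ closure (pMap P '' U) := by
      intro z hz
      rw [mem_closure_iff]
      intro O hO hzO
      rcases pTop_basis P hring hO z hzO with ⟨V, hV, hzV, hVO⟩ | rfl
      · obtain ⟨a, haV, rfl⟩ := hzV
        have haW : a ∈ W := (pMap_mem_image P hW).mp hz
        obtain ⟨y, ⟨hyV, _⟩, hyU⟩ :=
          hWskel (V ∩ W) (hring V hV W hW).2 inter_subset_right ⟨a, haV, haW⟩
        exact ⟨pMap P y, hVO ⟨y, hyV, rfl⟩, ⟨y, hyU, rfl⟩⟩
      · obtain ⟨u0, hu0⟩ := hUne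
        exact ⟨pMap P u0, mem_univ _, ⟨u0, hu0, rfl⟩⟩
    obtain ⟨w0, hw0⟩ := hWne
    exact ⟨pMap P w0, interior_maximal hWsub (pMap_image_isOpen P hW) ⟨w0, hw0, rfl⟩⟩
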